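/- (Quasideterminant factorization of the determinant) Let M be an n×n (q̂,p̂)-Manin matrix over R and let I=(i_1,…,i_n) and J=(j_1,…,j_n) be two permutations of (1,…,n), viewed as multi-indices. For 1≤k≤n let I_k and J_k denote the increasing rearrangements of (i_1,…,i_k) and (j_1,…,j_k) respectively. Assume that for each k the k×k submatrix M_{J_kI_k} is invertible over R and that the entry of (M_{J_kI_k})^{−1} in row i_k and column j_k is invertible in R, so that the quasideterminant |M_{J_kI_k}|_{j_k i_k} is defined. Then cdet_{q̂}(M) = (ε(q̂,J) / ε(p̂,I)) · |M_{J_1I_1}|_{j_1i_1} · |M_{J_2I_2}|_{j_2i_2} ⋯ |M_{J_nI_n}|_{j_ni_n}. -/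

import Mathlib

open scoped BigOperators Classical

noncomputable section

/-- `ε(q̂, I, σ)`: the `q̂`-inversion sign associated to the multi-index `I` and `σ ∈ S_r`,
`ε(q̂,I,σ) = ∏_{s<t, σ(s)>σ(t)} (-q_{i_{σ(s)} i_{σ(t)}})`. -/
def manEps {n r : ℕ} (q : Matrix (Fin n) (Fin n) ℂ) (I : Fin r → Fin n)
    (σ : Equiv.Perm (Fin r)) : ℂ :=
  ∏ st ∈ Finset.univ.filter (fun st : Fin r × Fin r => st.1 < st.2 ∧ σ st.2 < σ st.1),
    (-q (I (σ st.1)) (I (σ st.2)))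

/-- `ε(q̂, I)` for a multi-index `I`: `0` if two entries coincide, and
`∏_{s<t, i_s>i_t}(-q_{i_s i_t})` otherwise. -/
def manEpsIdx {n r : ℕ} (q : Matrix (Fin n) (Fin n) ℂ) (I : Fin r → Fin n) : ℂ :=
  if Function.Injective I then
    ∏ st ∈ Finset.univ.filter (fun st : Fin r × Fin r => st.1 < st.2 ∧ I st.2 < I st.1),
      (-q (I st.1) (I st.2))
  else 0

/-- The column `q̂`-minor determinant
`cdet_{q̂}(M_{IJ}) = ∑_{σ∈S_r} ε(q̂,I,σ) M_{i_{σ(1)},j_1} ⋯ M_{i_{σ(r)},j_r}`. -/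
def cdet {R : Type*} [Ring R] [Algebra ℂ R] {n m r : ℕ} (q : Matrix (Fin n) (Fin n) ℂ)
    (M : Matrix (Fin n) (Fin m) R) (I : Fin r → Fin n) (J : Fin r → Fin m) : R :=
  ∑ σ : Equiv.Perm (Fin r),
    manEps q I σ • (List.ofFn fun a : Fin r => M (I (σ a)) (J a)).prod

/-- A parametric matrix: nonzero entries with `q_{ij} q_{ji} = 1` and `q_{ii} = 1`. -/
def IsParametric {n : ℕ} (q : Matrix (Fin n) (Fin n) ℂ) : Prop :=
  (∀ i j, q i j ≠ 0) ∧ (∀ i j, q i j * q j i = 1) ∧ ∀ i, q i i = 1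

/-- An `n×m` `(q̂, p̂)`-Manin matrix over `R`. -/
def IsManin {R : Type*} [Ring R] [Algebra ℂ R] {n m : ℕ} (q : Matrix (Fin n) (Fin n) ℂ)
    (p : Matrix (Fin m) (Fin m) ℂ) (M : Matrix (Fin n) (Fin m) R) : Prop :=
  (∀ (i j : Fin n) (k : Fin m), i < j → M i k * M j k = q j i • (M j k * M i k)) ∧
  ∀ (i j : Fin n) (k l : Fin m), i < j → k < l →
    M i k * M j l - (q j i * p k l) • (M j l * M i k) + p k l • (M i l * M j k)
      - q j i • (M j k * M i l) = 0

/-- The set `{i_1, …, i_{k+1}}` of the first `k+1` values of the multi-index `I`.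
Its increasing enumeration is the ordered multi-index `I_{k+1}`. -/
def firstIdx {n : ℕ} (I : Fin n → Fin n) (k : Fin n) : Finset (Fin n) :=
  Finset.image (fun a : Fin ((k : ℕ) + 1) => I (Fin.castLE k.isLt a)) Finset.univ

theorem firstIdx_card {n : ℕ} {I : Fin n → Fin n} (hI : Function.Injective I) (k : Fin n) :
    (firstIdx I k).card = (k : ℕ) + 1 := by
  rw [firstIdx, Finset.card_image_of_injective _
    (fun a b hab => Fin.castLE_injective _ (hI hab))]
  simp

theorem self_mem_firstIdx {n : ℕ} (I : Fin n → Fin n) (k : Fin n) : I k ∈ firstIdx I k :=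
  Finset.mem_image.mpr ⟨⟨(k : ℕ), Nat.lt_succ_self _⟩, Finset.mem_univ _, rfl⟩


open Equiv Finset

section eps
variable {n r : ℕ} (q : Matrix (Fin n) (Fin n) ℂ)

/-- The set of strictly increasing pairs. -/
def upPairs (r : ℕ) : Finset (Fin r × Fin r) :=
  Finset.univ.filter (fun st => st.1 < st.2)

lemma manEps_eq_prod (K : Fin r → Fin n) (σ : Equiv.Perm (Fin r)) :
    manEps q K σ = ∏ st ∈ upPairs r,
      (if σ st.2 < σ st.1 then -q (K (σ st.1)) (K (σ st.2)) else 1) := by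
  rw [manEps, upPairs, Finset.prod_filter, Finset.prod_filter]
  refine Finset.prod_congr rfl fun st _ => ?_
  by_cases h1 : st.1 < st.2 <;> by_cases h2 : σ st.2 < σ st.1 <;> simp [h1, h2]

lemma manEps_one (K : Fin r → Fin n) : manEps q K 1 = 1 := by
  rw [manEps]
  refine Finset.prod_eq_one fun st hst => ?_
  simp only [Finset.mem_filter] at hst
  exact absurd hst.2.2 (by simpa using lt_asymm hst.2.1)

lemma manEps_ne_zero (hq : ∀ i j, q i j ≠ 0) (K : Fin r → Fin n) (σ : Equiv.Perm (Fin r)) :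
    manEps q K σ ≠ 0 := by
  rw [manEps]
  exact Finset.prod_ne_zero_iff.2 fun st _ => neg_ne_zero.2 (hq _ _)

/-- The cocycle identity for `manEps`. -/
lemma manEps_mul (hq : ∀ i j, q i j * q j i = 1) (K : Fin r → Fin n)
    (σ ρ : Equiv.Perm (Fin r)) :
    manEps q K (σ * ρ) = manEps q (K ∘ σ) ρ * manEps q K σ := by
  classical
  have hup : ∀ st : Fin r × Fin r, st ∈ upPairs r ↔ st.1 < st.2 := by
    intro st; simp [upPairs]
  -- reindex the σ-factor
  have hre : manEps q K σ = ∏ st ∈ upPairs r,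
      (fun st : Fin r × Fin r => if σ st.2 < σ st.1 then -q (K (σ st.1)) (K (σ st.2)) else 1)
        (if ρ st.1 < ρ st.2 then (ρ st.1, ρ st.2) else (ρ st.2, ρ st.1)) := by
    rw [manEps_eq_prod]
    refine Finset.prod_nbij'
      (fun st => if ρ⁻¹ st.1 < ρ⁻¹ st.2 then (ρ⁻¹ st.1, ρ⁻¹ st.2) else (ρ⁻¹ st.2, ρ⁻¹ st.1))
      (fun st => if ρ st.1 < ρ st.2 then (ρ st.1, ρ st.2) else (ρ st.2, ρ st.1))
      ?_ ?_ ?_ ?_ ?_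
    · intro st hst
      rw [hup] at hst ⊢
      by_cases h : ρ⁻¹ st.1 < ρ⁻¹ st.2
      · simp only [Equiv.Perm.inv_def] at h
        simpa [h]
      · simp only [h, if_false]
        rcases lt_or_eq_of_le (not_lt.1 h) with h' | h'
        · simpa using h'
        · exact absurd (ρ⁻¹.injective h') (ne_of_lt hst).symm
    · intro st hst
      rw [hup] at hst ⊢
      by_cases h : ρ st.1 < ρ st.2
      · simpa [h]
      · simp only [h, if_false]
        rcases lt_or_eq_of_le (not_lt.1 h) with h' | h'
        · simpa using h'
        · exact absurd (ρ.injective h') (ne_of_lt hst).symm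
    · intro st hst
      rw [hup] at hst
      by_cases h : ρ⁻¹ st.1 < ρ⁻¹ st.2 <;> simp only [h, if_true, if_false]
      · simp [hst]
      · have h2 : ρ⁻¹ st.2 < ρ⁻¹ st.1 := by
          rcases lt_or_eq_of_le (not_lt.1 h) with h' | h'
          · exact h'
          · exact absurd (ρ⁻¹.injective h') (ne_of_lt hst).symm
        simp [not_lt.2 (le_of_lt h2), hst, not_lt.2 (le_of_lt hst)]
    · intro st hst
      rw [hup] at hst
      by_cases h : ρ st.1 < ρ st.2 <;> simp only [h, if_true, if_false]
      · simp [hst]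
      · have h2 : ρ st.2 < ρ st.1 := by
          rcases lt_or_eq_of_le (not_lt.1 h) with h' | h'
          · exact h'
          · exact absurd (ρ.injective h') (ne_of_lt hst).symm
        simp [not_lt.2 (le_of_lt h2), hst, not_lt.2 (le_of_lt hst)]
    · intro st hst
      rw [hup] at hst
      by_cases h : ρ⁻¹ st.1 < ρ⁻¹ st.2 <;> simp only [Equiv.Perm.inv_def] at h <;>
        simp [h, hst, not_lt.2 (le_of_lt hst)]
  rw [manEps_eq_prod, manEps_eq_prod, hre, ← Finset.prod_mul_distrib]
  refine Finset.prod_congr rfl fun st hst => ?_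
  rw [hup] at hst
  obtain ⟨s, t⟩ := st
  simp only [Equiv.Perm.mul_apply, Function.comp_apply]
  by_cases h1 : ρ s < ρ t
  · have h1' : ¬ ρ t < ρ s := not_lt.2 (le_of_lt h1)
    simp only [if_pos h1, if_neg h1', one_mul]
    rfl
  · have hne : ρ s ≠ ρ t := fun hh => absurd (ρ.injective hh) (ne_of_lt hst)
    have h1' : ρ t < ρ s := lt_of_le_of_ne (not_lt.1 h1) (Ne.symm hne)
    simp only [if_neg h1, if_pos h1']
    by_cases h2 : σ (ρ t) < σ (ρ s)
    · have h2' : ¬ σ (ρ s) < σ (ρ t) := not_lt.2 (le_of_lt h2)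
      simp only [if_pos h2, if_neg h2', mul_one]
      exact if_pos h2
    · have hne2 : σ (ρ s) ≠ σ (ρ t) := fun hh => absurd (σ.injective hh) hne
      have h2' : σ (ρ s) < σ (ρ t) := lt_of_le_of_ne (not_lt.1 h2) hne2
      simp only [if_neg h2, if_pos h2', neg_mul_neg]
      exact (if_neg h2).trans (hq _ _).symm
end eps

section adj
variable {n r : ℕ} (q : Matrix (Fin n) (Fin n) ℂ)

lemma manEps_adjSwap (K : Fin r → Fin n) (c : ℕ) (hc : c + 1 < r) :
    manEps q K (Equiv.swap ⟨c, Nat.lt_of_succ_lt hc⟩ ⟨c + 1, hc⟩) =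
      -q (K ⟨c + 1, hc⟩) (K ⟨c, Nat.lt_of_succ_lt hc⟩) := by
  set a : Fin r := ⟨c, Nat.lt_of_succ_lt hc⟩ with ha
  set b : Fin r := ⟨c + 1, hc⟩ with hb
  have hfil : Finset.univ.filter
      (fun st : Fin r × Fin r => st.1 < st.2 ∧ Equiv.swap a b st.2 < Equiv.swap a b st.1)
      = {(a, b)} := by
    ext ⟨s, t⟩
    simp only [Finset.mem_filter, Finset.mem_univ, true_and, Finset.mem_singleton,
      Prod.mk.injEq]
    constructor
    · rintro ⟨h1, h2⟩
      rw [Equiv.swap_apply_def, Equiv.swap_apply_def] at h2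
      split_ifs at h2 <;>
        · simp only [Fin.lt_def, Fin.ext_iff, ha, hb] at *
          omega
    · rintro ⟨rfl, rfl⟩
      refine ⟨by simp [Fin.lt_def, ha, hb], ?_⟩
      rw [Equiv.swap_apply_left, Equiv.swap_apply_right]
      simp [Fin.lt_def, ha, hb]
  rw [manEps, hfil, Finset.prod_singleton, Equiv.swap_apply_left, Equiv.swap_apply_right]

end adj

section listsplit
variable {R : Type*} [Monoid R]

lemma ofFn_prod_split {r : ℕ} (f : Fin r → R) (c : ℕ) (hc : c + 1 < r) :
    (List.ofFn f).prod = ((List.ofFn f).take c).prod * f ⟨c, Nat.lt_of_succ_lt hc⟩ *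
      f ⟨c + 1, hc⟩ * ((List.ofFn f).drop (c + 2)).prod := by
  have hlen : (List.ofFn f).length = r := List.length_ofFn
  have h1 : c < (List.ofFn f).length := by omega
  have h2 : c + 1 < (List.ofFn f).length := by omega
  conv_lhs => rw [← List.take_append_drop c (List.ofFn f)]
  rw [List.prod_append, List.drop_eq_getElem_cons h1, List.drop_eq_getElem_cons h2,
    List.prod_cons, List.prod_cons, List.getElem_ofFn, List.getElem_ofFn]
  simp [mul_assoc]

lemma ofFn_take_congr {r : ℕ} (f g : Fin r → R) (c : ℕ)
    (h : ∀ a : Fin r, (a : ℕ) < c → f a = g a) :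
    (List.ofFn f).take c = (List.ofFn g).take c := by
  apply List.ext_getElem
  · simp
  · intro i h1 h2
    simp only [List.getElem_take, List.getElem_ofFn]
    exact h _ (by simpa using h1 : (i:ℕ) < c ∧ (i:ℕ) < r).1

lemma ofFn_drop_congr {r : ℕ} (f g : Fin r → R) (c : ℕ)
    (h : ∀ a : Fin r, c ≤ (a : ℕ) → f a = g a) :
    (List.ofFn f).drop c = (List.ofFn g).drop c := by
  apply List.ext_getElem
  · simp
  · intro i h1 h2
    simp only [List.getElem_drop, List.getElem_ofFn]
    exact h _ (Nat.le_add_right c i)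

end listsplit

section core
variable {R : Type*} [Ring R] [Algebra ℂ R]

lemma core_rearrange {a a' b b' : ℂ} (ha : a * a' = 1) (hb : b * b' = 1)
    {x1 x2 x3 x4 : R} (h : x1 - (a * b) • x2 + b • x3 - a • x4 = 0) :
    x3 + (-a) • x2 = (-b') • (x1 + (-a) • x4) := by
  have ha0 : a ≠ 0 := fun h0 => by simp [h0] at ha
  have hb0 : b ≠ 0 := fun h0 => by simp [h0] at hb
  have ha' : a' = a⁻¹ := eq_inv_of_mul_eq_one_right ha
  have hb' : b' = b⁻¹ := eq_inv_of_mul_eq_one_right hb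
  subst ha' hb'
  have h1 : x1 = (a * b) • x2 - b • x3 + a • x4 := by
    rw [← sub_eq_zero, ← h]; module
  rw [h1]
  match_scalars <;> field_simp <;> ring
end core

section cdetlemmas
variable {R : Type*} [Ring R] [Algebra ℂ R] {n m r : ℕ}
variable (q : Matrix (Fin n) (Fin n) ℂ) (p : Matrix (Fin m) (Fin m) ℂ)
variable (M : Matrix (Fin n) (Fin m) R)

lemma two_cancel {x y : R} (h : x + x = y + y) : x = y := by
  have h2 : (2 : ℂ) • x = (2 : ℂ) • y := by rw [two_smul, two_smul]; exact h
  calc x = (2 : ℂ)⁻¹ • ((2 : ℂ) • x) := (inv_smul_smul₀ two_ne_zero x).symm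
    _ = (2 : ℂ)⁻¹ • ((2 : ℂ) • y) := by rw [h2]
    _ = y := inv_smul_smul₀ two_ne_zero y

lemma core_rearrange2 {a a' b b' : ℂ} (ha : a * a' = 1) (hb : b * b' = 1)
    {x1 x2 x3 x4 : R} (h : x1 - (a * b) • x2 + b • x3 - a • x4 = 0) :
    x2 + (-a') • x3 = (-b') • (x4 + (-a') • x1) := by
  have ha0 : a ≠ 0 := fun h0 => by simp [h0] at ha
  have hb0 : b ≠ 0 := fun h0 => by simp [h0] at hb
  have ha' : a' = a⁻¹ := eq_inv_of_mul_eq_one_right ha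
  have hb' : b' = b⁻¹ := eq_inv_of_mul_eq_one_right hb
  subst ha' hb'
  have h1 : x1 = (a * b) • x2 - b • x3 + a • x4 := by
    rw [← sub_eq_zero, ← h]; module
  rw [h1]
  match_scalars <;> (field_simp; try ring)

lemma smul_flip {b b' : ℂ} (hb : b * b' = 1) {y z : R}
    (h : z = (-b') • y) : y = (-b) • z := by
  rw [h, smul_smul, show -b * -b' = 1 by rw [neg_mul_neg]; exact hb, one_smul]

lemma manin_star (hq : IsParametric q) (hp : IsParametric p) (hM : IsManin q p M)
    (i j : Fin n) (k l : Fin m) :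
    M i l * M j k + (-q j i) • (M j l * M i k)
      = (-p l k) • (M i k * M j l + (-q j i) • (M j k * M i l)) := by
  rcases lt_trichotomy i j with hij | rfl | hji
  · rcases lt_trichotomy k l with hkl | rfl | hlk
    · exact core_rearrange (hq.2.1 j i) (hp.2.1 k l) (hM.2 i j k l hij hkl)
    · rw [hp.2.2 k, hM.1 i j k hij]; module
    · exact smul_flip (hp.2.1 l k)
        (core_rearrange (hq.2.1 j i) (hp.2.1 l k) (hM.2 i j l k hij hlk))
  · rw [hq.2.2 i]; module
  · rcases lt_trichotomy k l with hkl | rfl | hlk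
    · exact core_rearrange2 (hq.2.1 i j) (hp.2.1 k l) (hM.2 j i k l hji hkl)
    · have e := hq.2.1 i j
      rw [hp.2.2 k, hM.1 j i k hji]
      match_scalars <;> linear_combination (-2 : ℂ) * e
    · exact smul_flip (hp.2.1 l k)
        (core_rearrange2 (hq.2.1 i j) (hp.2.1 l k) (hM.2 j i l k hji hlk))

lemma smul_sandwich (α β : ℂ) (T₁ T₂ X Y : R) :
    α • (T₁ * (X + β • Y) * T₂) = α • (T₁ * X * T₂) + (β * α) • (T₁ * Y * T₂) := by
  rw [mul_add, add_mul, smul_add, mul_smul_comm, smul_mul_assoc, smul_smul, mul_comm α β]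

lemma smul_pull (α γ : ℂ) (T₁ T₂ Z : R) :
    α • (T₁ * (γ • Z) * T₂) = γ • (α • (T₁ * Z * T₂)) := by
  rw [mul_smul_comm, smul_mul_assoc, smul_smul, smul_smul, mul_comm α γ]

lemma cdet_adjSwap (hq : IsParametric q) (hp : IsParametric p) (hM : IsManin q p M)
    (K : Fin r → Fin n) (L : Fin r → Fin m) (c : ℕ) (hc : c + 1 < r) :
    cdet q M K (L ∘ Equiv.swap ⟨c, Nat.lt_of_succ_lt hc⟩ ⟨c + 1, hc⟩)
      = (-p (L ⟨c + 1, hc⟩) (L ⟨c, Nat.lt_of_succ_lt hc⟩)) • cdet q M K L := by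
  classical
  set a : Fin r := ⟨c, Nat.lt_of_succ_lt hc⟩ with hadef
  set b : Fin r := ⟨c + 1, hc⟩ with hbdef
  set τ : Equiv.Perm (Fin r) := Equiv.swap a b with hτdef
  have hτa : τ a = b := Equiv.swap_apply_left a b
  have hτb : τ b = a := Equiv.swap_apply_right a b
  have hτx : ∀ x : Fin r, x ≠ a → x ≠ b → τ x = x := fun x h1 h2 =>
    Equiv.swap_apply_of_ne_of_ne h1 h2
  have hxa : ∀ x : Fin r, (x : ℕ) < c ∨ c + 2 ≤ (x : ℕ) → x ≠ a ∧ x ≠ b := by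
    intro x hx
    constructor <;>
      (intro hh; rw [Fin.ext_iff] at hh; simp only [hadef, hbdef] at hh; omega)
  have hsplit : ∀ f g : Fin r → R, (∀ x : Fin r, x ≠ a → x ≠ b → f x = g x) →
      (List.ofFn f).prod = ((List.ofFn g).take c).prod * (f a * f b) *
        ((List.ofFn g).drop (c + 2)).prod := by
    intro f g hfg
    rw [ofFn_prod_split f c hc,
      ofFn_take_congr f g c (fun x hx => hfg x (hxa x (Or.inl hx)).1 (hxa x (Or.inl hx)).2),
      ofFn_drop_congr f g (c + 2) (fun x hx => hfg x (hxa x (Or.inr hx)).1 (hxa x (Or.inr hx)).2),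
      hadef, hbdef, mul_assoc (((List.ofFn g).take c).prod)]
  have hrein : ∀ F : Equiv.Perm (Fin r) → R, (∑ σ, F (σ * τ)) = ∑ σ, F σ := fun F =>
    Equiv.sum_comp (Equiv.mulRight τ) F
  have hL : cdet q M K (L ∘ τ) = ∑ σ : Equiv.Perm (Fin r),
      manEps q K σ • (List.ofFn fun x => M (K (σ x)) (L (τ x))).prod := rfl
  have hG : cdet q M K L = ∑ σ : Equiv.Perm (Fin r),
      manEps q K σ • (List.ofFn fun x => M (K (σ x)) (L x)).prod := rfl
  have hkey : ∀ σ : Equiv.Perm (Fin r),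
      manEps q K σ • (List.ofFn fun x => M (K (σ x)) (L (τ x))).prod
        + manEps q K (σ * τ) • (List.ofFn fun x => M (K ((σ * τ) x)) (L (τ x))).prod
      = (-p (L b) (L a)) •
        (manEps q K σ • (List.ofFn fun x => M (K (σ x)) (L x)).prod
          + manEps q K (σ * τ) • (List.ofFn fun x => M (K ((σ * τ) x)) (L x)).prod) := by
    intro σ
    set i := K (σ a) with hi
    set j := K (σ b) with hj
    set k := L a with hk
    set l := L b with hl
    have hε : manEps q K (σ * τ) = (-q j i) * manEps q K σ := by
      rw [hτdef, hadef, hbdef, manEps_mul q hq.2.1 K σ (Equiv.swap _ _),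
        manEps_adjSwap q (K ∘ σ) c hc]
      rfl
    have e1 : (List.ofFn fun x => M (K (σ x)) (L (τ x))).prod =
        ((List.ofFn fun x => M (K (σ x)) (L x)).take c).prod * (M i l * M j k) *
        ((List.ofFn fun x => M (K (σ x)) (L x)).drop (c + 2)).prod := by
      rw [hsplit (fun x => M (K (σ x)) (L (τ x))) (fun x => M (K (σ x)) (L x))
        (fun x h1 h2 => by show M (K (σ x)) (L (τ x)) = M (K (σ x)) (L x); rw [hτx x h1 h2])]
      simp only [hτa, hτb, hi, hj, hk, hl]
    have e2 : (List.ofFn fun x => M (K ((σ * τ) x)) (L (τ x))).prod =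
        ((List.ofFn fun x => M (K (σ x)) (L x)).take c).prod * (M j l * M i k) *
        ((List.ofFn fun x => M (K (σ x)) (L x)).drop (c + 2)).prod := by
      rw [hsplit (fun x => M (K ((σ * τ) x)) (L (τ x))) (fun x => M (K (σ x)) (L x))
        (fun x h1 h2 => by
          show M (K ((σ * τ) x)) (L (τ x)) = M (K (σ x)) (L x)
          rw [Equiv.Perm.mul_apply, hτx x h1 h2])]
      simp only [Equiv.Perm.mul_apply, hτa, hτb, hi, hj, hk, hl]
    have e3 : (List.ofFn fun x => M (K (σ x)) (L x)).prod =
        ((List.ofFn fun x => M (K (σ x)) (L x)).take c).prod * (M i k * M j l) *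
        ((List.ofFn fun x => M (K (σ x)) (L x)).drop (c + 2)).prod := by
      rw [hsplit (fun x => M (K (σ x)) (L x)) (fun x => M (K (σ x)) (L x))
        (fun x _ _ => rfl)]
    have e4 : (List.ofFn fun x => M (K ((σ * τ) x)) (L x)).prod =
        ((List.ofFn fun x => M (K (σ x)) (L x)).take c).prod * (M j k * M i l) *
        ((List.ofFn fun x => M (K (σ x)) (L x)).drop (c + 2)).prod := by
      rw [hsplit (fun x => M (K ((σ * τ) x)) (L x)) (fun x => M (K (σ x)) (L x))
        (fun x h1 h2 => by
          show M (K ((σ * τ) x)) (L x) = M (K (σ x)) (L x)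
          rw [Equiv.Perm.mul_apply, hτx x h1 h2])]
      simp only [Equiv.Perm.mul_apply, hτa, hτb, hi, hj, hk, hl]
    rw [hε, e1, e2, e3, e4, ← smul_sandwich, ← smul_sandwich, ← smul_pull,
      manin_star q p M hq hp hM i j k l]
  apply two_cancel (R := R)
  have h2 : cdet q M K (L ∘ τ) + cdet q M K (L ∘ τ)
      = ∑ σ : Equiv.Perm (Fin r),
          (manEps q K σ • (List.ofFn fun x => M (K (σ x)) (L (τ x))).prod
           + manEps q K (σ * τ) • (List.ofFn fun x => M (K ((σ * τ) x)) (L (τ x))).prod) := by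
    have t1 : cdet q M K (L ∘ τ) = ∑ σ : Equiv.Perm (Fin r),
        manEps q K (σ * τ) • (List.ofFn fun x => M (K ((σ * τ) x)) (L (τ x))).prod := by
      rw [hL]
      exact (hrein fun σ =>
        manEps q K σ • (List.ofFn fun x => M (K (σ x)) (L (τ x))).prod).symm
    rw [Finset.sum_add_distrib, ← hL, ← t1]
  have h3 : (-p (L b) (L a)) • cdet q M K L + (-p (L b) (L a)) • cdet q M K L
      = ∑ σ : Equiv.Perm (Fin r), (-p (L b) (L a)) •
          (manEps q K σ • (List.ofFn fun x => M (K (σ x)) (L x)).prod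
           + manEps q K (σ * τ) • (List.ofFn fun x => M (K ((σ * τ) x)) (L x)).prod) := by
    have t1 : cdet q M K L = ∑ σ : Equiv.Perm (Fin r),
        manEps q K (σ * τ) • (List.ofFn fun x => M (K ((σ * τ) x)) (L x)).prod := by
      rw [hG]
      exact (hrein fun σ =>
        manEps q K σ • (List.ofFn fun x => M (K (σ x)) (L x)).prod).symm
    rw [← smul_add, ← Finset.smul_sum, Finset.sum_add_distrib, ← hG, ← t1]
  rw [h2, h3]
  exact Finset.sum_congr rfl fun σ _ => hkey σ

end cdetlemmas

section cdet2
variable {R : Type*} [Ring R] [Algebra ℂ R] {n m r : ℕ}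
variable (q : Matrix (Fin n) (Fin n) ℂ) (p : Matrix (Fin m) (Fin m) ℂ)
variable (M : Matrix (Fin n) (Fin m) R)

set_option maxHeartbeats 2000000 in
lemma cdet_eq_zero_of_dup (hq : IsParametric q) (hp : IsParametric p) (hM : IsManin q p M)
    (K : Fin r → Fin n) (L : Fin r → Fin m) (s t : Fin r) (hst : s < t) (hdup : L s = L t) :
    cdet q M K L = 0 := by
  classical
  have key : ∀ d : ℕ, ∀ (L : Fin r → Fin m) (t : Fin r), s < t → L s = L t →
      (t : ℕ) = (s : ℕ) + 1 + d → cdet q M K L = 0 := by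
    intro d
    induction d with
    | zero =>
      intro L t hst hdup hd
      have hc : (s : ℕ) + 1 < r := by have := t.isLt; omega
      have ha' : (⟨(s : ℕ), Nat.lt_of_succ_lt hc⟩ : Fin r) = s := by
        rw [Fin.ext_iff]
      have hb' : (⟨(s : ℕ) + 1, hc⟩ : Fin r) = t := by
        rw [Fin.ext_iff]; show (s : ℕ) + 1 = (t : ℕ); omega
      have h := cdet_adjSwap q p M hq hp hM K L (s : ℕ) hc
      rw [ha', hb'] at h
      have hswap : L ∘ Equiv.swap s t = L := by
        funext x
        simp only [Function.comp_apply, Equiv.swap_apply_def]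
        split_ifs with h1 h2
        · rw [h1, hdup]
        · rw [h2, hdup]
        · rfl
      rw [hswap, ← hdup, hp.2.2 (L s), neg_smul, one_smul] at h
      have h0 : cdet q M K L + cdet q M K L = 0 + 0 := by
        nth_rewrite 1 [h]
        rw [neg_add_cancel, add_zero]
      exact two_cancel h0
    | succ d ih =>
      intro L t hst hdup hd
      have hc : ((s : ℕ) + 1 + d) + 1 < r := by have := t.isLt; omega
      have hb' : (⟨(s : ℕ) + 1 + d + 1, hc⟩ : Fin r) = t := by
        rw [Fin.ext_iff]; show (s : ℕ) + 1 + d + 1 = (t : ℕ); omega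
      have h := cdet_adjSwap q p M hq hp hM K L ((s : ℕ) + 1 + d) hc
      have hslt : s < (⟨(s : ℕ) + 1 + d, Nat.lt_of_succ_lt hc⟩ : Fin r) := by
        rw [Fin.lt_def]; show (s : ℕ) < (s : ℕ) + 1 + d; omega
      have hzero : cdet q M K
          (L ∘ Equiv.swap ⟨(s : ℕ) + 1 + d, Nat.lt_of_succ_lt hc⟩ ⟨(s : ℕ) + 1 + d + 1, hc⟩)
          = 0 := by
        refine ih (L ∘ Equiv.swap ⟨(s : ℕ) + 1 + d, Nat.lt_of_succ_lt hc⟩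
            ⟨(s : ℕ) + 1 + d + 1, hc⟩) ⟨(s : ℕ) + 1 + d, Nat.lt_of_succ_lt hc⟩ hslt ?_ rfl
        simp only [Function.comp_apply]
        rw [Equiv.swap_apply_of_ne_of_ne
          (by rw [Ne, Fin.ext_iff]; show ¬ (s : ℕ) = (s : ℕ) + 1 + d; omega)
          (by rw [Ne, Fin.ext_iff]; show ¬ (s : ℕ) = (s : ℕ) + 1 + d + 1; omega),
          Equiv.swap_apply_left, hb', hdup]
      rw [hzero] at h
      have hne : (-p (L ⟨(s : ℕ) + 1 + d + 1, hc⟩)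
          (L ⟨(s : ℕ) + 1 + d, Nat.lt_of_succ_lt hc⟩)) ≠ 0 := neg_ne_zero.2 (hp.1 _ _)
      have h3 : cdet q M K L = (-p (L ⟨(s : ℕ) + 1 + d + 1, hc⟩)
          (L ⟨(s : ℕ) + 1 + d, Nat.lt_of_succ_lt hc⟩))⁻¹ •
          ((-p (L ⟨(s : ℕ) + 1 + d + 1, hc⟩)
            (L ⟨(s : ℕ) + 1 + d, Nat.lt_of_succ_lt hc⟩)) • cdet q M K L) :=
        (inv_smul_smul₀ hne _).symm
      rw [← h, smul_zero] at h3
      exact h3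
  have := hst; rw [Fin.lt_def] at this
  exact key ((t : ℕ) - (s : ℕ) - 1) L t hst hdup (by omega)

lemma cdet_colPerm (hq : IsParametric q) (hp : IsParametric p) (hM : IsManin q p M)
    (K : Fin r → Fin n) (L : Fin r → Fin m) (π : Equiv.Perm (Fin r)) :
    cdet q M K (L ∘ π) = manEps p L π • cdet q M K L := by
  classical
  cases r with
  | zero =>
    have hπ : π = 1 := Subsingleton.elim _ _
    subst hπ
    rw [manEps_one, one_smul]
    congr 1
  | succ r' =>
    have hmem : π ∈ Submonoid.closure
        (Set.range fun i : Fin r' => Equiv.swap i.castSucc i.succ) := by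
      rw [Equiv.Perm.mclosure_swap_castSucc_succ]; trivial
    have main : ∀ π' ∈ Submonoid.closure
        (Set.range fun i : Fin r' => Equiv.swap i.castSucc i.succ),
        ∀ L' : Fin (r' + 1) → Fin m,
          cdet q M K (L' ∘ π') = manEps p L' π' • cdet q M K L' := by
      intro π' hπ'
      induction hπ' using Submonoid.closure_induction with
      | mem x hx =>
        obtain ⟨i, rfl⟩ := hx
        intro L'
        have hc : (i : ℕ) + 1 < r' + 1 := by have := i.isLt; omega
        have h1 : i.castSucc = (⟨(i : ℕ), Nat.lt_of_succ_lt hc⟩ : Fin (r' + 1)) := rfl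
        have h2 : i.succ = (⟨(i : ℕ) + 1, hc⟩ : Fin (r' + 1)) := rfl
        show cdet q M K (L' ∘ ⇑(Equiv.swap i.castSucc i.succ))
          = manEps p L' (Equiv.swap i.castSucc i.succ) • cdet q M K L'
        rw [h1, h2, cdet_adjSwap q p M hq hp hM K L' (i : ℕ) hc,
          manEps_adjSwap p L' (i : ℕ) hc]
      | one =>
        intro L'
        have : L' ∘ ⇑(1 : Equiv.Perm (Fin (r' + 1))) = L' := by
          funext x; rfl
        rw [this, manEps_one, one_smul]
      | mul x y hx hy ihx ihy =>
        intro L'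
        have hco : L' ∘ ⇑(x * y) = (L' ∘ ⇑x) ∘ ⇑y := by funext a; rfl
        rw [hco, ihy (L' ∘ ⇑x), ihx L', manEps_mul p hp.2.1 L' x y, smul_smul]
    exact main π hmem L

lemma cdet_rowPerm (hq' : ∀ i j, q i j * q j i = 1) (K : Fin r → Fin n)
    (L : Fin r → Fin m) (π : Equiv.Perm (Fin r)) :
    cdet q M K L = manEps q K π • cdet q M (K ∘ π) L := by
  classical
  have hsum := Equiv.sum_comp (Equiv.mulLeft π)
    (fun τ : Equiv.Perm (Fin r) => manEps q K τ • (List.ofFn fun a => M (K (τ a)) (L a)).prod)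
  rw [show cdet q M K L = ∑ τ : Equiv.Perm (Fin r),
      manEps q K τ • (List.ofFn fun a => M (K (τ a)) (L a)).prod from rfl, ← hsum]
  rw [show cdet q M (K ∘ π) L = ∑ σ : Equiv.Perm (Fin r),
      manEps q (K ∘ π) σ • (List.ofFn fun a => M ((K ∘ π) (σ a)) (L a)).prod from rfl,
    Finset.smul_sum]
  refine Finset.sum_congr rfl fun σ _ => ?_
  have hc : manEps q K (π * σ) = manEps q (K ∘ π) σ * manEps q K π := manEps_mul q hq' K π σ
  have happ : ⇑(Equiv.mulLeft π) σ = π * σ := rfl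
  rw [happ, hc, ← smul_smul, smul_comm]
  rfl
end cdet2

section extperm
variable {r : ℕ}

/-- Extend a permutation of `Fin r` to `Fin (r+1)` fixing the last element. -/
def extLast (σ : Equiv.Perm (Fin r)) : Equiv.Perm (Fin (r + 1)) :=
  (finSuccEquivLast.symm).permCongr σ.optionCongr

@[simp] lemma extLast_castSucc (σ : Equiv.Perm (Fin r)) (a : Fin r) :
    extLast σ (Fin.castSucc a) = Fin.castSucc (σ a) := by
  simp [extLast, Equiv.permCongr_apply]

@[simp] lemma extLast_last (σ : Equiv.Perm (Fin r)) :
    extLast σ (Fin.last r) = Fin.last r := by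
  simp [extLast, Equiv.permCongr_apply]

lemma extLast_injective : Function.Injective (extLast (r := r)) := by
  intro σ₁ σ₂ h
  ext a
  have := congrArg (fun τ : Equiv.Perm (Fin (r + 1)) => τ (Fin.castSucc a)) h
  simp only [extLast_castSucc] at this
  exact congrArg Fin.val (Fin.castSucc_injective r this)

lemma extLast_surj (σ : Equiv.Perm (Fin (r + 1))) (hσ : σ (Fin.last r) = Fin.last r) :
    ∃ σ' : Equiv.Perm (Fin r), extLast σ' = σ := by
  classical
  set σOpt : Equiv.Perm (Option (Fin r)) := finSuccEquivLast.permCongr σ with hOpt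
  have hnone : σOpt none = none := by
    simp [hOpt, Equiv.permCongr_apply, ← finSuccEquivLast_last, hσ]
  refine ⟨Equiv.removeNone σOpt, ?_⟩
  ext x
  induction x using Fin.lastCases with
  | last => rw [extLast_last, hσ]
  | cast a =>
    rw [extLast_castSucc]
    have hsome : σOpt (some a) = some ((Equiv.removeNone σOpt) a) := by
      rcases hx : σOpt (some a) with _ | b
      · exact absurd (σOpt.injective (hx.trans hnone.symm)) (by simp)
      · rw [← hx]; exact (Equiv.removeNone_some σOpt ⟨b, hx⟩).symm
    have h3 : finSuccEquivLast (σ (Fin.castSucc a)) = some ((Equiv.removeNone σOpt) a) := by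
      rw [← hsome, hOpt]
      simp [Equiv.permCongr_apply]
    have h4 := congrArg (finSuccEquivLast.symm) h3
    rw [Equiv.symm_apply_apply, finSuccEquivLast_symm_some] at h4
    exact congrArg Fin.val h4.symm

lemma manEps_extLast {n : ℕ} (q : Matrix (Fin n) (Fin n) ℂ) (K : Fin (r + 1) → Fin n)
    (σ : Equiv.Perm (Fin r)) :
    manEps q K (extLast σ) = manEps q (K ∘ Fin.castSucc) σ := by
  classical
  rw [manEps, manEps]
  have himg : (Finset.univ.filter (fun st : Fin (r + 1) × Fin (r + 1) =>
      st.1 < st.2 ∧ extLast σ st.2 < extLast σ st.1))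
      = Finset.image (fun st : Fin r × Fin r => (Fin.castSucc st.1, Fin.castSucc st.2))
        (Finset.univ.filter (fun st : Fin r × Fin r => st.1 < st.2 ∧ σ st.2 < σ st.1)) := by
    ext ⟨s, t⟩
    simp only [Finset.mem_filter, Finset.mem_univ, true_and, Finset.mem_image, Prod.mk.injEq]
    constructor
    · rintro ⟨h1, h2⟩
      have hts : t ≠ Fin.last r := by
        rintro rfl
        rw [extLast_last] at h2
        exact absurd h2 (Fin.le_last _).not_gt
      have hss : s ≠ Fin.last r := by
        rintro rfl
        exact absurd h1 (Fin.le_last t).not_gt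
      obtain ⟨s', rfl⟩ : ∃ s', Fin.castSucc s' = s := ⟨s.castPred hss, Fin.castSucc_castPred s hss⟩
      obtain ⟨t', rfl⟩ : ∃ t', Fin.castSucc t' = t := ⟨t.castPred hts, Fin.castSucc_castPred t hts⟩
      rw [extLast_castSucc, extLast_castSucc] at h2
      exact ⟨(s', t'), ⟨Fin.castSucc_lt_castSucc_iff.1 h1,
        Fin.castSucc_lt_castSucc_iff.1 h2⟩, rfl, rfl⟩
    · rintro ⟨⟨s', t'⟩, ⟨h1, h2⟩, rfl, rfl⟩
      rw [extLast_castSucc, extLast_castSucc]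
      exact ⟨Fin.castSucc_lt_castSucc_iff.2 h1, Fin.castSucc_lt_castSucc_iff.2 h2⟩
  rw [himg, Finset.prod_image]
  · refine Finset.prod_congr rfl fun st hst => ?_
    rw [extLast_castSucc, extLast_castSucc]
    rfl
  · intro a _ b _ hab
    rw [Prod.mk.injEq] at hab
    exact Prod.ext (Fin.castSucc_injective r hab.1) (Fin.castSucc_injective r hab.2)

end extperm

section step
variable {R : Type*} [Ring R] [Algebra ℂ R] {n m r : ℕ}
variable (q : Matrix (Fin n) (Fin n) ℂ) (p : Matrix (Fin m) (Fin m) ℂ)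
variable (M : Matrix (Fin n) (Fin m) R)

lemma cdet_step (hq : IsParametric q) (hp : IsParametric p) (hM : IsManin q p M)
    (K : Fin (r + 1) → Fin n) (L : Fin (r + 1) → Fin m) (z : Fin (r + 1) → R)
    (hz : ∀ a : Fin (r + 1), (∑ b, M (K a) (L b) * z b)
      = if a = Fin.last r then 1 else 0) :
    cdet q M K L * z (Fin.last r) = cdet q M (K ∘ Fin.castSucc) (L ∘ Fin.castSucc) := by
  classical
  have hupd : Function.update L (Fin.last r) (L (Fin.last r)) = L := Function.update_eq_self _ _
  have hsingle : ∑ b : Fin (r + 1), cdet q M K (Function.update L (Fin.last r) (L b)) * z b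
      = cdet q M K L * z (Fin.last r) := by
    rw [Finset.sum_eq_single (Fin.last r)]
    · rw [hupd]
    · intro b _ hb
      have hblt : b < Fin.last r := Fin.lt_last_iff_ne_last.2 hb
      have hdup : (Function.update L (Fin.last r) (L b)) b
          = (Function.update L (Fin.last r) (L b)) (Fin.last r) := by
        rw [Function.update_of_ne hb, Function.update_self]
      rw [cdet_eq_zero_of_dup q p M hq hp hM K _ b (Fin.last r) hblt hdup, zero_mul]
    · intro h
      exact absurd (Finset.mem_univ _) h
  rw [← hsingle]
  have hexp : ∀ b : Fin (r + 1), ∀ σ : Equiv.Perm (Fin (r + 1)),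
      (List.ofFn fun a => M (K (σ a)) (Function.update L (Fin.last r) (L b) a)).prod
      = (List.ofFn fun a : Fin r =>
          M (K (σ a.castSucc)) (L a.castSucc)).prod * M (K (σ (Fin.last r))) (L b) := by
    intro b σ
    rw [List.ofFn_succ', List.prod_concat]
    congr 1
    · refine congrArg List.prod (congrArg List.ofFn ?_)
      funext a
      show M (K (σ a.castSucc)) (Function.update L (Fin.last r) (L b) a.castSucc)
        = M (K (σ a.castSucc)) (L a.castSucc)
      rw [Function.update_of_ne (Fin.castSucc_lt_last a).ne]
    · show M (K (σ (Fin.last r))) (Function.update L (Fin.last r) (L b) (Fin.last r))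
        = M (K (σ (Fin.last r))) (L b)
      rw [Function.update_self]
  have hcd : ∀ b : Fin (r + 1), cdet q M K (Function.update L (Fin.last r) (L b))
      = ∑ σ : Equiv.Perm (Fin (r + 1)), manEps q K σ •
        ((List.ofFn fun a : Fin r => M (K (σ a.castSucc)) (L a.castSucc)).prod
          * M (K (σ (Fin.last r))) (L b)) := by
    intro b
    refine Finset.sum_congr rfl fun σ _ => ?_
    rw [hexp b σ]
  have hper : ∀ σ : Equiv.Perm (Fin (r + 1)),
      (∑ b, (manEps q K σ •
        ((List.ofFn fun a : Fin r => M (K (σ a.castSucc)) (L a.castSucc)).prod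
          * M (K (σ (Fin.last r))) (L b))) * z b)
      = manEps q K σ •
        ((List.ofFn fun a : Fin r => M (K (σ a.castSucc)) (L a.castSucc)).prod
          * (if σ (Fin.last r) = Fin.last r then 1 else 0)) := by
    intro σ
    rw [← hz (σ (Fin.last r)), Finset.mul_sum, Finset.smul_sum]
    refine Finset.sum_congr rfl fun b _ => ?_
    rw [smul_mul_assoc, mul_assoc]
  calc ∑ b : Fin (r + 1), cdet q M K (Function.update L (Fin.last r) (L b)) * z b
      = ∑ b : Fin (r + 1), ∑ σ : Equiv.Perm (Fin (r + 1)),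
          (manEps q K σ •
            ((List.ofFn fun a : Fin r => M (K (σ a.castSucc)) (L a.castSucc)).prod
              * M (K (σ (Fin.last r))) (L b))) * z b := by
        refine Finset.sum_congr rfl fun b _ => ?_
        rw [hcd b, Finset.sum_mul]
    _ = ∑ σ : Equiv.Perm (Fin (r + 1)), ∑ b : Fin (r + 1),
          (manEps q K σ •
            ((List.ofFn fun a : Fin r => M (K (σ a.castSucc)) (L a.castSucc)).prod
              * M (K (σ (Fin.last r))) (L b))) * z b := Finset.sum_comm
    _ = ∑ σ : Equiv.Perm (Fin (r + 1)), manEps q K σ •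
          ((List.ofFn fun a : Fin r => M (K (σ a.castSucc)) (L a.castSucc)).prod
            * (if σ (Fin.last r) = Fin.last r then 1 else 0)) :=
        Finset.sum_congr rfl fun σ _ => hper σ
    _ = ∑ σ : Equiv.Perm (Fin (r + 1)),
          (if σ (Fin.last r) = Fin.last r then manEps q K σ •
            (List.ofFn fun a : Fin r => M (K (σ a.castSucc)) (L a.castSucc)).prod else 0) := by
        refine Finset.sum_congr rfl fun σ _ => ?_
        split_ifs with h
        · rw [mul_one]
        · rw [mul_zero, smul_zero]
    _ = ∑ σ ∈ Finset.univ.filter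
          (fun σ : Equiv.Perm (Fin (r + 1)) => σ (Fin.last r) = Fin.last r),
          manEps q K σ •
            (List.ofFn fun a : Fin r => M (K (σ a.castSucc)) (L a.castSucc)).prod :=
        (Finset.sum_filter _ _).symm
    _ = ∑ σ' : Equiv.Perm (Fin r), manEps q (K ∘ Fin.castSucc) σ' •
          (List.ofFn fun a : Fin r =>
            M ((K ∘ Fin.castSucc) (σ' a)) ((L ∘ Fin.castSucc) a)).prod := by
        refine (Finset.sum_bij (fun (σ' : Equiv.Perm (Fin r)) _ => extLast σ')
          ?_ ?_ ?_ ?_).symm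
        · intro σ' _
          simp only [Finset.mem_filter, Finset.mem_univ, true_and]
          exact extLast_last σ'
        · intro a _ b _ h
          exact extLast_injective h
        · intro σ hσ
          simp only [Finset.mem_filter, Finset.mem_univ, true_and] at hσ
          obtain ⟨σ', rfl⟩ := extLast_surj σ hσ
          exact ⟨σ', Finset.mem_univ _, rfl⟩
        · intro σ' _
          show manEps q (K ∘ Fin.castSucc) σ' •
              (List.ofFn fun a : Fin r =>
                M ((K ∘ Fin.castSucc) (σ' a)) ((L ∘ Fin.castSucc) a)).prod
            = manEps q K (extLast σ') •
              (List.ofFn fun a : Fin r =>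
                M (K ((extLast σ') a.castSucc)) (L a.castSucc)).prod
          rw [manEps_extLast]
          refine congrArg _ (congrArg List.prod (congrArg List.ofFn ?_))
          funext a
          show M ((K ∘ Fin.castSucc) (σ' a)) ((L ∘ Fin.castSucc) a)
            = M (K ((extLast σ') a.castSucc)) (L a.castSucc)
          rw [extLast_castSucc]
          rfl
    _ = cdet q M (K ∘ Fin.castSucc) (L ∘ Fin.castSucc) := rfl
end step

lemma cdet_zero {R : Type*} [Ring R] [Algebra ℂ R] {n m : ℕ} (q : Matrix (Fin n) (Fin n) ℂ)
    (M : Matrix (Fin n) (Fin m) R) (K : Fin 0 → Fin n) (L : Fin 0 → Fin m) :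
    cdet q M K L = 1 := by
  haveI : Subsingleton (Equiv.Perm (Fin 0)) := ⟨fun σ τ => Equiv.ext fun x => x.elim0⟩
  rw [show cdet q M K L = ∑ σ : Equiv.Perm (Fin 0),
    manEps q K σ • (List.ofFn fun a => M (K (σ a)) (L a)).prod from rfl]
  rw [Finset.sum_eq_single (1 : Equiv.Perm (Fin 0))
    (fun b _ hb => absurd (Subsingleton.elim b 1) hb)
    (fun h => absurd (Finset.mem_univ _) h)]
  rw [manEps_one, List.ofFn_zero, List.prod_nil, one_smul]

/-- Factorization of the column determinant of a `(q̂,p̂)`-Manin matrix into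
quasideterminants: with `I, J` permutations of `(1,…,n)`, `Y k` the inverse of the
submatrix `M_{J_{k+1} I_{k+1}}` and `w k` the inverse of the entry of `Y k` in the row
labelled `i_{k+1}` and column labelled `j_{k+1}` (i.e. the quasideterminant
`|M_{J_{k+1}I_{k+1}}|_{j_{k+1} i_{k+1}}`), one has
`cdet_{q̂}(M) = (ε(q̂,J)/ε(p̂,I)) ⬝ |M_{J_1I_1}|_{j_1i_1} ⋯ |M_{J_nI_n}|_{j_ni_n}`. -/

theorem cdet_eq_prod_quasideterminants {R : Type*} [Ring R] [Algebra ℂ R] {n : ℕ}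
    (q p : Matrix (Fin n) (Fin n) ℂ) (hq : IsParametric q) (hp : IsParametric p)
    (M : Matrix (Fin n) (Fin n) R) (hM : IsManin q p M)
    (I J : Fin n → Fin n) (hI : Function.Bijective I) (hJ : Function.Bijective J)
    (Y : ∀ k : Fin n, Matrix (Fin ((k : ℕ) + 1)) (Fin ((k : ℕ) + 1)) R)
    (hY : ∀ k : Fin n,
      M.submatrix ⇑((firstIdx J k).orderEmbOfFin (firstIdx_card hJ.1 k))
          ⇑((firstIdx I k).orderEmbOfFin (firstIdx_card hI.1 k)) * Y k = 1 ∧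
      Y k * M.submatrix ⇑((firstIdx J k).orderEmbOfFin (firstIdx_card hJ.1 k))
          ⇑((firstIdx I k).orderEmbOfFin (firstIdx_card hI.1 k)) = 1)
    (w : Fin n → R)
    (hw : ∀ k : Fin n,
      Y k ((Finset.orderIsoOfFin _ (firstIdx_card hI.1 k)).symm ⟨I k, self_mem_firstIdx I k⟩)
          ((Finset.orderIsoOfFin _ (firstIdx_card hJ.1 k)).symm ⟨J k, self_mem_firstIdx J k⟩)
        * w k = 1 ∧
      w k *
        Y k ((Finset.orderIsoOfFin _ (firstIdx_card hI.1 k)).symm ⟨I k, self_mem_firstIdx I k⟩)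
          ((Finset.orderIsoOfFin _ (firstIdx_card hJ.1 k)).symm ⟨J k, self_mem_firstIdx J k⟩)
        = 1) :
    cdet q M id id = (manEpsIdx q J / manEpsIdx p I) • (List.ofFn w).prod := by
  classical
  -- Step lemma for each size r+1 ≤ n
  have step : ∀ r : ℕ, ∀ hr1 : r + 1 ≤ n,
      cdet q M (fun a : Fin (r + 1) => J (Fin.castLE hr1 a))
        (fun a : Fin (r + 1) => I (Fin.castLE hr1 a))
      = cdet q M (fun a : Fin r => J (Fin.castLE (Nat.le_of_succ_le hr1) a))
          (fun a : Fin r => I (Fin.castLE (Nat.le_of_succ_le hr1) a)) * w ⟨r, hr1⟩ := by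
    intro r hr1
    set k : Fin n := ⟨r, hr1⟩ with hkdef
    set isoI := Finset.orderIsoOfFin (firstIdx I k) (firstIdx_card hI.1 k) with hisoI
    set isoJ := Finset.orderIsoOfFin (firstIdx J k) (firstIdx_card hJ.1 k) with hisoJ
    have memI : ∀ b : Fin (r + 1), I (Fin.castLE hr1 b) ∈ firstIdx I k :=
      fun b => Finset.mem_image.mpr ⟨b, Finset.mem_univ _, rfl⟩
    have memJ : ∀ b : Fin (r + 1), J (Fin.castLE hr1 b) ∈ firstIdx J k :=
      fun b => Finset.mem_image.mpr ⟨b, Finset.mem_univ _, rfl⟩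
    set ρI : Fin (r + 1) → Fin (r + 1) := fun b => isoI.symm ⟨I (Fin.castLE hr1 b), memI b⟩
      with hρI
    set ρJ : Fin (r + 1) → Fin (r + 1) := fun b => isoJ.symm ⟨J (Fin.castLE hr1 b), memJ b⟩
      with hρJ
    have hρIinj : Function.Injective ρI := by
      intro a b hab
      have h1 : (⟨I (Fin.castLE hr1 a), memI a⟩ : {x // x ∈ firstIdx I k})
          = ⟨I (Fin.castLE hr1 b), memI b⟩ := isoI.symm.injective hab
      have h2 : I (Fin.castLE hr1 a) = I (Fin.castLE hr1 b) := congrArg Subtype.val h1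
      exact Fin.castLE_injective hr1 (hI.1 h2)
    have hρJinj : Function.Injective ρJ := by
      intro a b hab
      have h1 : (⟨J (Fin.castLE hr1 a), memJ a⟩ : {x // x ∈ firstIdx J k})
          = ⟨J (Fin.castLE hr1 b), memJ b⟩ := isoJ.symm.injective hab
      have h2 : J (Fin.castLE hr1 a) = J (Fin.castLE hr1 b) := congrArg Subtype.val h1
      exact Fin.castLE_injective hr1 (hJ.1 h2)
    have hρIbij : Function.Bijective ρI := Finite.injective_iff_bijective.mp hρIinj
    have hembI : ∀ b : Fin (r + 1),
        (firstIdx I k).orderEmbOfFin (firstIdx_card hI.1 k) (ρI b) = I (Fin.castLE hr1 b) := by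
      intro b
      rw [hρI]
      rw [← Finset.coe_orderIsoOfFin_apply, ← hisoI, OrderIso.apply_symm_apply]
    have hembJ : ∀ b : Fin (r + 1),
        (firstIdx J k).orderEmbOfFin (firstIdx_card hJ.1 k) (ρJ b) = J (Fin.castLE hr1 b) := by
      intro b
      rw [hρJ]
      rw [← Finset.coe_orderIsoOfFin_apply, ← hisoJ, OrderIso.apply_symm_apply]
    set z : Fin (r + 1) → R := fun b => Y k (ρI b) (ρJ (Fin.last r)) with hz0
    have hz : ∀ a : Fin (r + 1),
        (∑ b, M (J (Fin.castLE hr1 a)) (I (Fin.castLE hr1 b)) * z b)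
        = if a = Fin.last r then 1 else 0 := by
      intro a
      have h1 := congrArg (fun X => X (ρJ a) (ρJ (Fin.last r))) (hY k).1
      simp only [Matrix.mul_apply, Matrix.one_apply, Matrix.submatrix_apply] at h1
      have h2 : (∑ b, M (J (Fin.castLE hr1 a)) (I (Fin.castLE hr1 b)) * z b)
          = ∑ c, M ((firstIdx J k).orderEmbOfFin (firstIdx_card hJ.1 k) (ρJ a))
              ((firstIdx I k).orderEmbOfFin (firstIdx_card hI.1 k) c)
            * Y k c (ρJ (Fin.last r)) := by
        refine Fintype.sum_bijective ρI hρIbij _ _ fun b => ?_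
        rw [hembI b, hembJ a]
      rw [h2, h1]
      by_cases ha : a = Fin.last r
      · rw [if_pos ha, if_pos (by rw [ha])]
      · rw [if_neg (fun hc => ha (hρJinj hc)), if_neg ha]
    have hstep := cdet_step q p M hq hp hM
      (fun a : Fin (r + 1) => J (Fin.castLE hr1 a))
      (fun a : Fin (r + 1) => I (Fin.castLE hr1 a)) z hz
    -- identify the two sides
    have hKcs : ((fun a : Fin (r + 1) => J (Fin.castLE hr1 a)) ∘ Fin.castSucc)
        = fun a : Fin r => J (Fin.castLE (Nat.le_of_succ_le hr1) a) := by
      funext a; rfl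
    have hLcs : ((fun a : Fin (r + 1) => I (Fin.castLE hr1 a)) ∘ Fin.castSucc)
        = fun a : Fin r => I (Fin.castLE (Nat.le_of_succ_le hr1) a) := by
      funext a; rfl
    rw [hKcs, hLcs] at hstep
    -- z (last) is the quasideterminant inverse entry
    have hzlast : z (Fin.last r)
        = Y k (isoI.symm ⟨I k, self_mem_firstIdx I k⟩) (isoJ.symm ⟨J k, self_mem_firstIdx J k⟩) := by
      rw [hz0, hρI, hρJ]
      congr 2
    have hwk := hw k
    rw [← hisoI, ← hisoJ, ← hzlast] at hwk
    calc cdet q M (fun a : Fin (r + 1) => J (Fin.castLE hr1 a))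
          (fun a : Fin (r + 1) => I (Fin.castLE hr1 a))
        = cdet q M (fun a : Fin (r + 1) => J (Fin.castLE hr1 a))
            (fun a : Fin (r + 1) => I (Fin.castLE hr1 a)) * (z (Fin.last r) * w k) := by
          rw [hwk.1, mul_one]
      _ = (cdet q M (fun a : Fin (r + 1) => J (Fin.castLE hr1 a))
            (fun a : Fin (r + 1) => I (Fin.castLE hr1 a)) * z (Fin.last r)) * w k := by
          rw [mul_assoc]
      _ = cdet q M (fun a : Fin r => J (Fin.castLE (Nat.le_of_succ_le hr1) a))
            (fun a : Fin r => I (Fin.castLE (Nat.le_of_succ_le hr1) a)) * w ⟨r, hr1⟩ := by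
          rw [hstep]
  -- Main induction
  have main : ∀ r : ℕ, ∀ hr : r ≤ n,
      cdet q M (fun a : Fin r => J (Fin.castLE hr a)) (fun a : Fin r => I (Fin.castLE hr a))
      = (List.ofFn fun a : Fin r => w (Fin.castLE hr a)).prod := by
    intro r
    induction r with
    | zero => intro hr; rw [cdet_zero, List.ofFn_zero, List.prod_nil]
    | succ r ih =>
      intro hr
      rw [step r hr, ih (Nat.le_of_succ_le hr)]
      rw [List.ofFn_succ', List.prod_concat]
      congr 1
  have hJI : cdet q M J I = (List.ofFn w).prod := by
    have h1 := main n (le_refl n)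
    have h2 : (fun a : Fin n => J (Fin.castLE (le_refl n) a)) = J := by funext a; rfl
    have h3 : (fun a : Fin n => I (Fin.castLE (le_refl n) a)) = I := by funext a; rfl
    have h4 : (List.ofFn fun a : Fin n => w (Fin.castLE (le_refl n) a)) = List.ofFn w := by
      refine congrArg List.ofFn ?_
      funext a; rfl
    rw [h2, h3, h4] at h1
    exact h1
  -- permutations
  set πI : Equiv.Perm (Fin n) := Equiv.ofBijective I hI with hπI
  set πJ : Equiv.Perm (Fin n) := Equiv.ofBijective J hJ with hπJ
  have hIco : (id ∘ ⇑πI) = I := by funext a; rfl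
  have hJco : (id ∘ ⇑πJ) = J := by funext a; rfl
  have hcol := cdet_colPerm q p M hq hp hM (id : Fin n → Fin n) (id : Fin n → Fin n) πI
  rw [hIco] at hcol
  have hrow := cdet_rowPerm q M hq.2.1 (id : Fin n → Fin n) (I : Fin n → Fin n) πJ
  rw [hJco] at hrow
  -- hcol : cdet q M id I = manEps p id πI • cdet q M id id
  -- hrow : cdet q M id I = manEps q id πJ • cdet q M J I
  have hpne : manEps p id πI ≠ 0 := manEps_ne_zero p hp.1 id πI
  have hIdx1 : manEpsIdx q J = manEps q id πJ := by
    rw [manEpsIdx, if_pos hJ.1, manEps]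
    rfl
  have hIdx2 : manEpsIdx p I = manEps p id πI := by
    rw [manEpsIdx, if_pos hI.1, manEps]
    rfl
  have hmain : cdet q M id id = (manEps p id πI)⁻¹ • (manEps q id πJ • (List.ofFn w).prod) := by
    rw [← hJI, ← hrow, hcol, inv_smul_smul₀ hpne]
  rw [hmain, hIdx1, hIdx2, smul_smul, div_eq_mul_inv, mul_comm]
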